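/- Let c̃₁, c̃₂ ∈ Homeo_ℤ(ℝ), let k ≥ 1 be an integer, and suppose there exist real numbers x₁⁰ < x₂⁰ < x₁¹ < x₂¹ < ⋯ < x₁^{k−1} < x₂^{k−1} < x₁⁰ + 1 such that c̃ᵢ(xᵢʲ + m) = xᵢʲ + m for all i ∈ {1,2}, all j ∈ {0,…,k−1}, and all m ∈ ℤ (i.e., each xᵢʲ is a lift of a fixed point of cᵢ, and the fixed points of c₁ and c₂ form k alternating pairs on the circle). Then τ(c̃₁ c̃₂) ≤ 1/k. -/

import Mathlib

/-- If the fixed points of `c₁` and `c₂` contain `k` alternating pairs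
`x₁⁰ < x₂⁰ < x₁¹ < x₂¹ < ⋯ < x₁^{k-1} < x₂^{k-1} < x₁⁰ + 1` (each fixed together with all its
integer translates), then `τ(c̃₁ c̃₂) ≤ 1/k`. -/
theorem translationNumber_mul_le_of_alternating_pairs (c₁ c₂ : CircleDeg1Liftˣ)
    (k : ℕ) (hk : 1 ≤ k) (x y : ℕ → ℝ)
    (hxy : ∀ j < k, x j < y j)
    (hyx : ∀ j, j + 1 < k → y j < x (j + 1))
    (hwrap : y (k - 1) < x 0 + 1)
    (hfix1 : ∀ j < k, ∀ m : ℤ, (c₁ : CircleDeg1Lift) (x j + m) = x j + m)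
    (hfix2 : ∀ j < k, ∀ m : ℤ, (c₂ : CircleDeg1Lift) (y j + m) = y j + m) :
    CircleDeg1Lift.translationNumber ↑(c₁ * c₂) ≤ 1 / (k : ℝ) := by
  set f : CircleDeg1Lift := ↑(c₁ * c₂) with hf
  -- step lemma: if t ≤ x j + m with j < k, then f t is below the "next" fixed point
  have step : ∀ (j m : ℕ), j < k → ∀ t : ℝ, t ≤ x j + m →
      (if j + 1 < k then f t ≤ x (j + 1) + m else f t ≤ x 0 + (m + 1)) := by
    intro j m hj t ht
    have hty : t ≤ y j + m := ht.trans (by linarith [hxy j hj])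
    have h2 : (c₂ : CircleDeg1Lift) t ≤ y j + m := by
      have h := (c₂ : CircleDeg1Lift).mono hty
      have hfy := hfix2 j hj (m : ℤ)
      push_cast at hfy
      rwa [hfy] at h
    by_cases hj1 : j + 1 < k
    · have hlt : (c₂ : CircleDeg1Lift) t ≤ x (j + 1) + m := by
        have := hyx j hj1; linarith
      have h3 : (c₁ : CircleDeg1Lift) ((c₂ : CircleDeg1Lift) t) ≤ x (j + 1) + m := by
        have h := (c₁ : CircleDeg1Lift).mono hlt
        have hfx := hfix1 (j + 1) hj1 (m : ℤ)
        push_cast at hfx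
        rwa [hfx] at h
      simp only [hj1, if_true]
      simpa [hf, CircleDeg1Lift.mul_apply] using h3
    · have hjk : j = k - 1 := by omega
      have hlt : (c₂ : CircleDeg1Lift) t ≤ x 0 + ((m : ℝ) + 1) := by
        rw [hjk] at h2; linarith
      have h3 : (c₁ : CircleDeg1Lift) ((c₂ : CircleDeg1Lift) t) ≤ x 0 + ((m : ℝ) + 1) := by
        have := (c₁ : CircleDeg1Lift).mono hlt
        have hfix := hfix1 0 (by omega) (m + 1)
        push_cast at hfix
        rwa [hfix] at this
      simp only [hj1, if_false]
      have : f t = (c₁ : CircleDeg1Lift) ((c₂ : CircleDeg1Lift) t) := by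
        simp [hf, CircleDeg1Lift.mul_apply]
      rw [this]; push_cast; linarith
  -- iterates of x 0 stay below fixed points
  have iter : ∀ n : ℕ, ∃ j m : ℕ, j < k ∧ k * m + j ≤ n ∧ (f ^ n) (x 0) ≤ x j + m := by
    intro n
    induction n with
    | zero => exact ⟨0, 0, by omega, by omega, by simp⟩
    | succ n ih =>
      obtain ⟨j, m, hj, hkm, hle⟩ := ih
      have hpow : (f ^ (n + 1)) (x 0) = f ((f ^ n) (x 0)) := by
        rw [pow_succ']; rfl
      have := step j m hj _ hle
      by_cases hj1 : j + 1 < k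
      · refine ⟨j + 1, m, hj1, by omega, ?_⟩
        rw [hpow]; simpa [hj1] using this
      · have hmul : k * (m + 1) = k * m + k := by ring
        refine ⟨0, m + 1, by omega, by omega, ?_⟩
        rw [hpow]
        simp only [hj1, if_false] at this
        push_cast; push_cast at this; linarith
  -- pass to the limit
  have htendsto := f.tendsto_translationNumber (x 0)
  have hbound : ∀ n : ℕ, ((f ^ n) (x 0) - x 0) / n ≤ 1 / (n : ℝ) + 1 / k := by
    intro n
    rcases Nat.eq_zero_or_pos n with hn | hn
    · subst hn
      simp only [pow_zero, CircleDeg1Lift.coe_one, id_eq, sub_self, Nat.cast_zero, div_zero]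
      positivity
    · obtain ⟨j, m, hj, hkm, hle⟩ := iter n
      have hnpos : (0 : ℝ) < n := by exact_mod_cast hn
      have hkpos : (0 : ℝ) < k := by exact_mod_cast hk
      have hxj : x j ≤ x 0 + 1 := by
        rcases Nat.eq_zero_or_pos j with hj0 | hj0
        · subst hj0; linarith
        · -- x j < y j ≤ ... use chain: x j ≤ y (k-1) ? need x j < x0 + 1
          -- x j < y j and chain up to y (k-1) < x 0 + 1
          have chain : ∀ i, i < k → x i < x 0 + 1 := by
            intro i hi
            have : ∀ d, ∀ i, i + d = k - 1 → i < k → x i < x 0 + 1 := by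
              intro d
              induction d with
              | zero => intro i h1 h2
                        have : i = k - 1 := by omega
                        subst this; linarith [hxy (k-1) (by omega)]
              | succ d ihd =>
                  intro i h1 h2
                  have h3 : i + 1 < k := by omega
                  have := ihd (i + 1) (by omega) h3
                  linarith [hxy i h2, hyx i h3]
            exact this (k - 1 - i) i (by omega) hi
          exact le_of_lt (chain j hj)
      have hm : (m : ℝ) ≤ n / k := by
        rw [le_div_iff₀ hkpos]
        have : (k : ℝ) * m ≤ n := by exact_mod_cast Nat.le_trans (by omega) hkm
        linarith
      have : ((f ^ n) (x 0) - x 0) ≤ 1 + m := by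
        have := hle; linarith
      have h4 : (m : ℝ) * k ≤ n := by
        rw [le_div_iff₀ hkpos] at hm; linarith
      calc ((f ^ n) (x 0) - x 0) / n ≤ (1 + m) / n := by gcongr
           _ = 1 / n + (m : ℝ) / n := by rw [add_div]
           _ ≤ 1 / n + 1 / k := by
            refine add_le_add_right ?_ _
            rw [div_le_div_iff₀ hnpos hkpos]
            linarith
  have hlim : Filter.Tendsto (fun n : ℕ => 1 / (n : ℝ) + 1 / k) Filter.atTop (nhds (0 + 1 / k)) := by
    exact (tendsto_one_div_atTop_nhds_zero_nat).add tendsto_const_nhds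
  rw [zero_add] at hlim
  exact le_of_tendsto_of_tendsto' htendsto hlim hbound
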